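/- arXiv:2506.03898 — 3 statements merged into one kernel-verified Lean document; each statement's English description precedes it below -/
import Mathlib

section
/- Let H, G, Ḡ be Hilbert spaces, h* ∈ H with ‖h*‖ ≤ S, M : H → G^N bounded, η ∈ G^N, λ > 0, y = Mh* + η, and h_λ = (M*M + λ·id_H)^{-1} M* y. Then for every bounded operator L̄ : H → Ḡ, ‖L̄ h_λ − L̄ h*‖ ≤ ‖L̄ (M*M + λ·id_H)^{-1/2}‖ · ( ‖(M*M + λ·id_H)^{-1/2} M* η‖ + λ^{1/2} S ). -/
open scoped RealInnerProductSpace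

instance pilpCompleteSpace {p : ENNReal} {ι : Type*} {β : ι → Type*} [∀ i, UniformSpace (β i)]
    [∀ i, CompleteSpace (β i)] : CompleteSpace (PiLp p β) :=
  (PiLp.uniformEquiv p β).completeSpace_iff.2 inferInstance

set_option maxHeartbeats 1000000 in
/-- With `‖h*‖ ≤ S`, `y = M h* + η`, and
`h_λ = (M*M + λ·id)⁻¹ M* y`, for every bounded `L̄ : H → Ḡ`:
`‖L̄ h_λ − L̄ h*‖ ≤ ‖L̄ (M*M + λ·id)^{-1/2}‖ · (‖(M*M + λ·id)^{-1/2} M* η‖ + √λ · S)`.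
Here `T = (M*M + λ·id)⁻¹` and `Shalf = (M*M + λ·id)^{-1/2}` are encoded by their
defining algebraic properties. -/
theorem stmt4
    {H G Gbar : Type*}
    [NormedAddCommGroup H] [InnerProductSpace ℝ H] [CompleteSpace H]
    [NormedAddCommGroup G] [InnerProductSpace ℝ G] [CompleteSpace G]
    [NormedAddCommGroup Gbar] [InnerProductSpace ℝ Gbar] [CompleteSpace Gbar]
    (N : ℕ)
    (M : H →L[ℝ] PiLp 2 fun _ : Fin N => G)
    (lam : ℝ) (hlam : 0 < lam)
    (hstar : H) (S : ℝ) (hS : ‖hstar‖ ≤ S)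
    (η : PiLp 2 fun _ : Fin N => G)
    (y : PiLp 2 fun _ : Fin N => G) (hy : y = M hstar + η)
    (T : H →L[ℝ] H)
    (hT1 : T ∘L (ContinuousLinearMap.adjoint M ∘L M + lam • (1 : H →L[ℝ] H)) = 1)
    (hT2 : (ContinuousLinearMap.adjoint M ∘L M + lam • (1 : H →L[ℝ] H)) ∘L T = 1)
    (Shalf : H →L[ℝ] H)
    (hShalfSA : IsSelfAdjoint Shalf)
    (hShalfPos : ∀ x : H, 0 ≤ ⟪Shalf x, x⟫)
    (hShalfSq : Shalf ∘L Shalf = T)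
    (hlamEst : H) (hEst : hlamEst = T (ContinuousLinearMap.adjoint M y))
    (Lbar : H →L[ℝ] Gbar) :
    ‖Lbar hlamEst - Lbar hstar‖
      ≤ ‖Lbar ∘L Shalf‖ *
        (‖Shalf (ContinuousLinearMap.adjoint M η)‖ + Real.sqrt lam * S) := by

  set A := ContinuousLinearMap.adjoint M with hAdef
  -- Bound: ‖Shalf x‖ ≤ ‖x‖ / √lam
  have hsl : Real.sqrt lam > 0 := Real.sqrt_pos.mpr hlam
  have hsl2 : Real.sqrt lam ^ 2 = lam := Real.sq_sqrt hlam.le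
  have hShalfBound : ∀ x : H, ‖Shalf x‖ ≤ ‖x‖ / Real.sqrt lam := by
    intro x
    have hsq : ‖Shalf x‖ ^ 2 = ⟪x, T x⟫ := by
      rw [← hShalfSq]
      have h1 := ContinuousLinearMap.adjoint_inner_left Shalf (Shalf x) x
      rw [hShalfSA.adjoint_eq] at h1
      rw [← real_inner_self_eq_norm_sq, h1]
      rfl
    set u := T x with hu
    have hax : A (M u) + lam • u = x := by
      have := congrArg (fun f => f x) hT2
      simpa [u] using this
    have hinner : ⟪u, x⟫ = ‖M u‖ ^ 2 + lam * ‖u‖ ^ 2 := by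
      rw [← hax, inner_add_right, inner_smul_right]
      rw [ContinuousLinearMap.adjoint_inner_right, real_inner_self_eq_norm_sq,
        real_inner_self_eq_norm_sq]
    have h2 : lam * ‖u‖ ^ 2 ≤ ‖u‖ * ‖x‖ := by
      have := real_inner_le_norm u x
      nlinarith [sq_nonneg ‖M u‖]
    have hunorm : ‖u‖ ≤ ‖x‖ / lam := by
      rcases eq_or_lt_of_le (norm_nonneg u) with h | h
      · rw [← h]; positivity
      · rw [le_div_iff₀ hlam]; nlinarith
    have h3 : ⟪x, u⟫ ≤ ‖x‖ ^ 2 / lam := by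
      have h4 := real_inner_le_norm x u
      have : ‖x‖ * ‖u‖ ≤ ‖x‖ * (‖x‖ / lam) :=
        mul_le_mul_of_nonneg_left hunorm (norm_nonneg x)
      calc ⟪x, u⟫ ≤ ‖x‖ * ‖u‖ := h4
        _ ≤ ‖x‖ * (‖x‖ / lam) := this
        _ = ‖x‖ ^ 2 / lam := by ring
    have h5 : ‖Shalf x‖ ^ 2 ≤ ‖x‖ ^ 2 / lam := hsq ▸ h3
    rw [le_div_iff₀ hsl]
    have h6 : (‖Shalf x‖ * Real.sqrt lam) ^ 2 ≤ ‖x‖ ^ 2 := by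
      rw [mul_pow, hsl2]
      rw [le_div_iff₀ hlam] at h5
      linarith
    have h7 := Real.sqrt_le_sqrt h6
    rwa [Real.sqrt_sq (by positivity), Real.sqrt_sq (norm_nonneg x)] at h7
  -- decompose the error
  have h1 : T (A (M hstar) + lam • hstar) = hstar := by
    have := congrArg (fun f => f hstar) hT1
    simpa using this
  have h2 : T (A (M hstar)) = hstar - lam • T hstar := by
    have := h1
    rw [map_add, map_smul] at this
    linear_combination (norm := abel) this
  have hd : hlamEst - hstar = T (A η) - lam • T hstar := by
    rw [hEst, hy, map_add, map_add, h2]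
    abel
  have key : Lbar hlamEst - Lbar hstar
      = (Lbar ∘L Shalf) (Shalf (A η) - lam • Shalf hstar) := by
    rw [← map_sub, hd, ← hShalfSq]
    simp [map_sub, map_smul]
  rw [key]
  have hb2 : lam * ‖Shalf hstar‖ ≤ Real.sqrt lam * S := by
    have := hShalfBound hstar
    have h6 : lam * ‖Shalf hstar‖ ≤ lam * (‖hstar‖ / Real.sqrt lam) :=
      mul_le_mul_of_nonneg_left this hlam.le
    have h7 : lam * (‖hstar‖ / Real.sqrt lam) = Real.sqrt lam * ‖hstar‖ := by
      field_simp
      linear_combination -‖hstar‖ * hsl2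
    calc lam * ‖Shalf hstar‖ ≤ Real.sqrt lam * ‖hstar‖ := by rw [← h7]; exact h6
      _ ≤ Real.sqrt lam * S := mul_le_mul_of_nonneg_left hS hsl.le
  calc ‖(Lbar ∘L Shalf) (Shalf (A η) - lam • Shalf hstar)‖
      ≤ ‖Lbar ∘L Shalf‖ * ‖Shalf (A η) - lam • Shalf hstar‖ :=
        (Lbar ∘L Shalf).le_opNorm _
    _ ≤ ‖Lbar ∘L Shalf‖ * (‖Shalf (A η)‖ + Real.sqrt lam * S) := by
        apply mul_le_mul_of_nonneg_left _ (norm_nonneg _)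
        calc ‖Shalf (A η) - lam • Shalf hstar‖
            ≤ ‖Shalf (A η)‖ + ‖lam • Shalf hstar‖ := norm_sub_le _ _
          _ = ‖Shalf (A η)‖ + lam * ‖Shalf hstar‖ := by
              rw [norm_smul, Real.norm_of_nonneg hlam.le]
          _ ≤ ‖Shalf (A η)‖ + Real.sqrt lam * S := by linarith
end

section
/- Let G be a separable Hilbert space, R : G → G a bounded, self-adjoint, positive semi-definite operator, and η a G-valued random variable with mean zero that is R-subgaussian, i.e., E[exp⟨g, η⟩] ≤ exp(½⟨Rg, g⟩) for all g ∈ G. Then η takes values in the closure of the range of R almost surely. -/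
open scoped RealInnerProductSpace
open MeasureTheory

lemma aux_nonpos {Ω : Type*} [MeasurableSpace Ω] (μ : Measure Ω) [IsProbabilityMeasure μ]
    (X : Ω → ℝ)
    (hint : ∀ t : ℝ, Integrable (fun ω => Real.exp (t * X ω)) μ)
    (h : ∀ t : ℝ, 0 < t → ∫ ω, Real.exp (t * X ω) ∂μ ≤ 1) :
    ∀ᵐ ω ∂μ, X ω ≤ 0 := by
  have key : ∀ ε : ℝ, 0 < ε → μ {ω | ε ≤ X ω} = 0 := by
    intro ε hε
    have hb : ∀ t : ℝ, 0 < t → (μ {ω | ε ≤ X ω}).toReal ≤ Real.exp (-(t * ε)) := by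
      intro t ht
      have h1 : Real.exp (t * ε) *
          (μ {ω | Real.exp (t * ε) ≤ Real.exp (t * X ω)}).toReal ≤ 1 :=
        le_trans (mul_meas_ge_le_integral_of_nonneg
          (Filter.Eventually.of_forall fun ω => (Real.exp_pos _).le) (hint t) _) (h t ht)
      have hset : {ω | ε ≤ X ω} ⊆ {ω | Real.exp (t * ε) ≤ Real.exp (t * X ω)} :=
        fun ω hω => Real.exp_le_exp.2 (by nlinarith [Set.mem_setOf_eq ▸ hω])
      have h2 : (μ {ω | ε ≤ X ω}).toReal ≤
          (μ {ω | Real.exp (t * ε) ≤ Real.exp (t * X ω)}).toReal :=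
        ENNReal.toReal_mono (measure_ne_top _ _) (measure_mono hset)
      have h3 : (μ {ω | ε ≤ X ω}).toReal ≤ 1 / Real.exp (t * ε) := by
        rw [le_div_iff₀ (Real.exp_pos _)]
        nlinarith [Real.exp_pos (t * ε)]
      rw [Real.exp_neg, ← one_div]
      exact h3
    have htend : Filter.Tendsto (fun t : ℝ => Real.exp (-(t * ε))) Filter.atTop (nhds 0) :=
      Real.tendsto_exp_neg_atTop_nhds_zero.comp (Filter.tendsto_id.atTop_mul_const hε)
    have h0 : (μ {ω | ε ≤ X ω}).toReal ≤ 0 :=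
      ge_of_tendsto htend ((Filter.eventually_gt_atTop 0).mono fun t ht => hb t ht)
    have h4 : (μ {ω | ε ≤ X ω}).toReal = 0 := le_antisymm h0 ENNReal.toReal_nonneg
    have := measure_ne_top μ {ω | ε ≤ X ω}
    rcases (ENNReal.toReal_eq_zero_iff _).1 h4 with h | h
    · exact h
    · exact absurd h this
  have hU : μ {ω | 0 < X ω} = 0 := by
    have hsub : {ω | 0 < X ω} ⊆ ⋃ n : ℕ, {ω | 1 / (n + 1 : ℝ) ≤ X ω} := by
      intro ω hω
      obtain ⟨n, hn⟩ := exists_nat_one_div_lt (K := ℝ) hω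
      exact Set.mem_iUnion.2 ⟨n, hn.le⟩
    exact measure_mono_null hsub (measure_iUnion_null fun n => key _ (by positivity))
  rw [Filter.eventually_iff, mem_ae_iff]
  convert hU using 2
  ext ω
  simp [not_le]

/-- A mean-zero `R`-subgaussian random variable with values in a separable
Hilbert space `G` (with `R` bounded, self-adjoint, positive semi-definite) takes values in
the closure of the range of `R` almost surely. -/
theorem stmt5
    {G : Type*} [NormedAddCommGroup G] [InnerProductSpace ℝ G] [CompleteSpace G]
    [SecondCountableTopology G] [MeasurableSpace G] [BorelSpace G]
    {Ω : Type*} [MeasurableSpace Ω] (μ : Measure Ω) [IsProbabilityMeasure μ]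
    (R : G →L[ℝ] G) (hRsa : IsSelfAdjoint R) (hRpos : ∀ g : G, 0 ≤ ⟪R g, g⟫)
    (η : Ω → G) (hmeas : Measurable η)
    (hint : Integrable η μ) (hmean : ∫ ω, η ω ∂μ = 0)
    (hintexp : ∀ g : G, Integrable (fun ω => Real.exp ⟪g, η ω⟫) μ)
    (hsub : ∀ g : G, ∫ ω, Real.exp ⟪g, η ω⟫ ∂μ ≤ Real.exp (⟪R g, g⟫ / 2)) :
    ∀ᵐ ω ∂μ, η ω ∈ closure (Set.range R) := by
  set K : Submodule ℝ G := LinearMap.range (R : G →ₗ[ℝ] G) with hK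
  -- For any e orthogonal to the range, R e = 0
  have hker : ∀ e : G, e ∈ Kᗮ → R e = 0 := by
    intro e he
    have h1 : ⟪R (R e), e⟫ = 0 := he (R (R e)) ⟨R e, rfl⟩
    have h2 : ⟪R e, R e⟫ = 0 := (hRsa.isSymmetric (R e) e).symm.trans h1
    exact inner_self_eq_zero.mp h2
  -- For any e ∈ Kᗮ, ⟪e, η ω⟫ = 0 a.s.
  have hzero : ∀ e : G, e ∈ Kᗮ → ∀ᵐ ω ∂μ, ⟪e, η ω⟫ = 0 := by
    have hle : ∀ e : G, e ∈ Kᗮ → ∀ᵐ ω ∂μ, ⟪e, η ω⟫ ≤ 0 := by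
      intro e he
      apply aux_nonpos μ (fun ω => ⟪e, η ω⟫)
      · intro t
        have := hintexp (t • e)
        simpa [real_inner_smul_left] using this
      · intro t ht
        have h1 := hsub (t • e)
        have h2 : R (t • e) = 0 := by rw [R.map_smul, hker e he, smul_zero]
        rw [h2] at h1
        simpa [real_inner_smul_left] using h1
    intro e he
    have h1 := hle e he
    have h2 := hle (-e) (Kᗮ.neg_mem he)
    filter_upwards [h1, h2] with ω hω1 hω2
    simp only [inner_neg_left, neg_nonpos] at hω2
    linarith
  -- countable dense subset of Kᗮ
  obtain ⟨D, hDc, hDd⟩ := TopologicalSpace.exists_countable_dense (↥Kᗮ)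
  have hae : ∀ᵐ ω ∂μ, ∀ e ∈ D, ⟪(e : G), η ω⟫ = 0 := by
    rw [MeasureTheory.ae_ball_iff hDc]
    intro e _
    exact hzero e e.2
  filter_upwards [hae] with ω hω
  have hall : ∀ e : ↥Kᗮ, ⟪(e : G), η ω⟫ = 0 := by
    have hc : Continuous fun e : ↥Kᗮ => ⟪(e : G), η ω⟫ :=
      (continuous_inner.comp (continuous_subtype_val.prodMk continuous_const))
    have := Continuous.ext_on hDd hc continuous_const (fun e heD => hω e heD)
    intro e
    exact congrFun this e
  have hmem : η ω ∈ Kᗮᗮ := by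
    rw [Submodule.mem_orthogonal]
    intro u hu
    exact hall ⟨u, hu⟩
  rw [Submodule.orthogonal_orthogonal_eq_closure] at hmem
  have : (Set.range (R : G → G)) = (K : Set G) := rfl
  rw [this]
  exact hmem
end

section
/- Let H be a separable Hilbert space, V : H → H self-adjoint and positive definite with V = ∑_m λ_m b_m ⊗ b_m for an orthonormal basis (b_m) and λ_m > 0, and with V^{-1} bounded. Let M : H → G be a bounded operator into a Hilbert space G with M M* trace-class. Define the truncations W_M = ∑_{m=1}^{M} λ_m^{-1} b_m ⊗ b_m. Then M W_M M* converges to M V^{-1} M* in the trace norm as M → ∞. -/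
open scoped RealInnerProductSpace
open Filter

/-- Let `V = ∑ₘ λₘ bₘ ⊗ bₘ` be self-adjoint positive definite with
bounded inverse (i.e. `λₘ⁻¹ ≤ C`), and `M : H → G` bounded with `M M*` trace-class
(equivalently, `∑ₘ ‖M bₘ‖² < ∞`). Let `Wop N = M W_N M*` where
`W_N = ∑_{m<N} λₘ⁻¹ bₘ ⊗ bₘ` is the truncation, and `A = M V⁻¹ M*`. Then `M W_N M*`
converges to `M V⁻¹ M*` in the trace norm as `N → ∞`; since the difference
`A − Wop N ≥ 0` is positive, trace-norm convergence means
`tr(A − Wop N) = ∑ₙ ⟨(A − Wop N) eₙ, eₙ⟩ → 0` for a Hilbert basis `(eₙ)` of `G`. -/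
theorem stmt14
    {H G : Type*}
    [NormedAddCommGroup H] [InnerProductSpace ℝ H] [CompleteSpace H]
    [NormedAddCommGroup G] [InnerProductSpace ℝ G] [CompleteSpace G]
    (b : HilbertBasis ℕ ℝ H) (e : HilbertBasis ℕ ℝ G)
    (lam : ℕ → ℝ) (hlam : ∀ m, 0 < lam m)
    (C : ℝ) (hC : ∀ m, (lam m)⁻¹ ≤ C)
    (M : H →L[ℝ] G)
    (V : H →L[ℝ] H)
    (hV : ∀ h : H, V h = ∑' m, (lam m * ⟪b m, h⟫) • b m)
    (htrace : Summable fun m => ‖M (b m)‖ ^ 2)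
    (A : G →L[ℝ] G)
    (hA : ∀ g : G, A g = ∑' m, ((lam m)⁻¹ * ⟪M (b m), g⟫) • M (b m))
    (Wop : ℕ → G →L[ℝ] G)
    (hW : ∀ (N : ℕ) (g : G),
      Wop N g = ∑ m ∈ Finset.range N, ((lam m)⁻¹ * ⟪M (b m), g⟫) • M (b m)) :
    Tendsto (fun N => ∑' n, ⟪A (e n) - Wop N (e n), e n⟫) atTop (nhds 0) := by
  classical
  set t : ℕ → ℕ → ℝ := fun m n => (lam m)⁻¹ * ⟪M (b m), e n⟫ ^ 2 with ht
  set g : ℕ → ℝ := fun m => (lam m)⁻¹ * ‖M (b m)‖ ^ 2 with hgdef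
  -- Parseval
  have hts : ∀ m, HasSum (fun n => t m n) (g m) := by
    intro m
    have h := e.hasSum_inner_mul_inner (M (b m)) (M (b m))
    have h2 : HasSum (fun n => ⟪M (b m), e n⟫ ^ 2) (‖M (b m)‖ ^ 2) := by
      simpa [real_inner_comm, sq, real_inner_self_eq_norm_sq] using h
    simpa [ht, hgdef] using h2.mul_left ((lam m)⁻¹)
  have hg_nonneg : ∀ m, 0 ≤ g m := fun m =>
    mul_nonneg (inv_nonneg.2 (hlam m).le) (sq_nonneg _)
  have hgsum : Summable g := by
    refine Summable.of_nonneg_of_le hg_nonneg (fun m => ?_) (htrace.mul_left C)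
    exact mul_le_mul_of_nonneg_right (hC m) (sq_nonneg _)
  -- double summability
  have hsec2 : ∀ n, Summable fun m => t m n := by
    intro n
    refine Summable.of_nonneg_of_le
      (fun m => mul_nonneg (inv_nonneg.2 (hlam m).le) (sq_nonneg _))
      (fun m => ?_) (htrace.mul_left C)
    have h1 : ⟪M (b m), e n⟫ ^ 2 ≤ ‖M (b m)‖ ^ 2 := by
      have := abs_real_inner_le_norm (M (b m)) (e n)
      rw [e.orthonormal.1 n, mul_one] at this
      calc ⟪M (b m), e n⟫ ^ 2 = |⟪M (b m), e n⟫| ^ 2 := (sq_abs _).symm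
        _ ≤ ‖M (b m)‖ ^ 2 := by
          exact pow_le_pow_left₀ (abs_nonneg _) this 2
    calc (lam m)⁻¹ * ⟪M (b m), e n⟫ ^ 2 ≤ C * ⟪M (b m), e n⟫ ^ 2 :=
          mul_le_mul_of_nonneg_right (hC m) (sq_nonneg _)
      _ ≤ C * ‖M (b m)‖ ^ 2 := by
          refine mul_le_mul_of_nonneg_left h1 ?_
          exact le_trans (inv_nonneg.2 (hlam 0).le) (hC 0)
  have hF : Summable (Function.uncurry t) := by
    refine (summable_prod_of_nonneg
      (f := Function.uncurry t)
      (fun p => mul_nonneg (inv_nonneg.2 (hlam p.1).le) (sq_nonneg _))).2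
      ⟨fun m => (hts m).summable, ?_⟩
    simpa [Function.uncurry, fun m => (hts m).tsum_eq] using hgsum
  have hsumcol : Summable fun n => ∑' m, t m n := by
    have := hF.prod_symm
    have h := (summable_prod_of_nonneg
      (f := fun p : ℕ × ℕ => t p.2 p.1)
      (fun p => mul_nonneg (inv_nonneg.2 (hlam p.2).le) (sq_nonneg _))).1 this
    exact h.2
  -- inner products
  have hAinner : ∀ n, HasSum (fun m => t m n) ⟪A (e n), e n⟫ := by
    intro n
    set v : ℕ → G := fun m => ((lam m)⁻¹ * ⟪M (b m), e n⟫) • M (b m) with hv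
    have hvs : Summable v := by
      refine Summable.of_norm (Summable.of_nonneg_of_le (fun m => norm_nonneg _)
        (fun m => ?_) (htrace.mul_left C))
      have hen : ‖e n‖ = 1 := e.orthonormal.1 n
      have h1 : |⟪M (b m), e n⟫| ≤ ‖M (b m)‖ := by
        simpa [hen] using abs_real_inner_le_norm (M (b m)) (e n)
      have : ‖v m‖ = |(lam m)⁻¹| * |⟪M (b m), e n⟫| * ‖M (b m)‖ := by
        simp [hv, norm_smul, abs_mul, abs_inv]
      rw [this, abs_of_nonneg (inv_nonneg.2 (hlam m).le)]
      calc (lam m)⁻¹ * |⟪M (b m), e n⟫| * ‖M (b m)‖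
          ≤ C * ‖M (b m)‖ * ‖M (b m)‖ := by
            refine mul_le_mul_of_nonneg_right ?_ (norm_nonneg _)
            exact mul_le_mul (hC m) h1 (abs_nonneg _)
              (le_trans (inv_nonneg.2 (hlam 0).le) (hC 0))
        _ = C * ‖M (b m)‖ ^ 2 := by ring
    have hvsum : HasSum v (A (e n)) := by
      rw [hA (e n)]; exact hvs.hasSum
    have h2 := hvsum.mapL (innerSL ℝ (e n))
    have h3 : (fun m => (innerSL ℝ (e n)) (v m)) = fun m => t m n := by
      funext m
      simp only [innerSL_apply_apply, hv, inner_smul_right, ht]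
      rw [real_inner_comm (e n) (M (b m))]
      ring
    rw [h3, innerSL_apply_apply, real_inner_comm] at h2
    exact h2
  have hWinner : ∀ N n, ⟪Wop N (e n), e n⟫ = ∑ m ∈ Finset.range N, t m n := by
    intro N n
    rw [hW N (e n), sum_inner]
    refine Finset.sum_congr rfl fun m _ => ?_
    rw [real_inner_smul_left, ht]; ring
  -- value of trace
  set T : ℝ := ∑' m, g m with hT
  have hval : ∀ N, (∑' n, ⟪A (e n) - Wop N (e n), e n⟫)
      = T - ∑ m ∈ Finset.range N, g m := by
    intro N
    have h1 : ∀ n, ⟪A (e n) - Wop N (e n), e n⟫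
        = (∑' m, t m n) - ∑ m ∈ Finset.range N, t m n := by
      intro n
      rw [inner_sub_left, (hAinner n).tsum_eq, hWinner]
    calc (∑' n, ⟪A (e n) - Wop N (e n), e n⟫)
        = ∑' n, ((∑' m, t m n) - ∑ m ∈ Finset.range N, t m n) := by
          exact tsum_congr h1
      _ = (∑' n, ∑' m, t m n) - ∑' n, ∑ m ∈ Finset.range N, t m n := by
          refine Summable.tsum_sub hsumcol ?_
          exact summable_sum (fun m _ => (hts m).summable)
      _ = T - ∑ m ∈ Finset.range N, g m := by
          congr 1
          · rw [Summable.tsum_comm' hF (fun m => (hts m).summable) hsec2]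
            exact tsum_congr fun m => (hts m).tsum_eq
          · rw [Summable.tsum_finsetSum (fun m _ => (hts m).summable)]
            exact Finset.sum_congr rfl fun m _ => (hts m).tsum_eq
  simp only [hval]
  have := hgsum.hasSum.tendsto_sum_nat
  have h := (tendsto_const_nhds (x := T) (f := atTop)).sub this
  simpa [hT] using h
end
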